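/- (Michel time-change lemma) Let u, v be measurable controls with u(t) ∈ U and v(t) ≥ 1/2, and let (x, z) solve x' = v(t) f(x(t), u(t)), x(0) = b, z' = v(t), z(0) = 0 on [0, T]. Then there exists a measurable control u' with u'(t) ∈ U such that the solution x' of y' = f(y, u'(t)), y(0) = b satisfies x'(z(t)) = x(t) for all t ∈ [0, T], and ∫₀^T v(t) e^{−r z(t)} f₀(x(t), u(t)) dt = ∫₀^{z(T)} e^{−rt} f₀(x'(t), u'(t)) dt. -/

import Mathlib

open MeasureTheory Set

open scoped ENNReal NNReal

lemma michel_map_aux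
    (vb : ℝ → ℝ) (hvb : Measurable vb) (hge : ∀ t, (1:ℝ)/2 ≤ vb t)
    (hint : ∀ a b : ℝ, IntervalIntegrable vb volume a b)
    (w : ℝ → ℝ) (hw : ∀ t, w t = ∫ s in (0:ℝ)..t, vb s)
    (hwc : Continuous w) (hwm : StrictMono w)
    (t : ℝ) (ht : 0 ≤ t) :
    Measure.map w ((volume.restrict (Icc 0 t)).withDensity
        (fun s => ENNReal.ofReal (vb s)))
      = volume.restrict (Icc 0 (w t)) := by
  have hw0 : w 0 = 0 := by rw [hw, intervalIntegral.integral_same]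
  set μt := (volume.restrict (Icc (0:ℝ) t)).withDensity (fun s => ENNReal.ofReal (vb s)) with hμt
  have hwmeas : Measurable w := hwc.measurable
  have hμtfin : IsFiniteMeasure μt := by
    constructor
    rw [hμt, withDensity_apply _ MeasurableSet.univ, Measure.restrict_univ]
    have hi : IntegrableOn vb (Icc 0 t) :=
      (intervalIntegrable_iff_integrableOn_Icc_of_le ht).mp (hint 0 t)
    calc ∫⁻ s in Icc (0:ℝ) t, ENNReal.ofReal (vb s) ∂volume
        ≤ ∫⁻ s in Icc (0:ℝ) t, (‖vb s‖₊ : ℝ≥0∞) ∂volume := by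
          refine lintegral_mono fun s => ?_
          exact ENNReal.ofReal_le_of_le_toReal (by simp [Real.norm_eq_abs, abs_nonneg, le_abs_self])
      _ < ⊤ := hi.2
  have : IsFiniteMeasure (Measure.map w μt) := by
    constructor
    rw [Measure.map_apply hwmeas MeasurableSet.univ]
    exact measure_lt_top _ _
  refine Measure.ext_of_Iic _ _ fun a => ?_
  rw [Measure.map_apply hwmeas measurableSet_Iic, Measure.restrict_apply measurableSet_Iic]
  rcases lt_or_ge a 0 with ha | ha
  · -- a < 0 : both sides zero
    have h1 : w ⁻¹' Iic a ⊆ (Icc (0:ℝ) t)ᶜ := by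
      intro s hs hmem
      have h0 : (0:ℝ) ≤ w s := hw0 ▸ hwm.monotone hmem.1
      have h2 : w s ≤ a := hs
      linarith
    have h2 : μt (w ⁻¹' Iic a) = 0 := by
      refine measure_mono_null h1 ?_
      refine (withDensity_absolutelyContinuous _ _) ?_
      rw [Measure.restrict_apply (measurableSet_Icc).compl]
      simp
    rw [h2]
    have : Iic a ∩ Icc (0:ℝ) (w t) = ∅ := by
      ext s; simp only [mem_inter_iff, mem_Iic, mem_Icc, mem_empty_iff_false, iff_false]
      rintro ⟨h1', h2', _⟩; linarith
    rw [this]; simp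
  · -- a ≥ 0
    have hwt0 : 0 ≤ w t := hw0 ▸ hwm.monotone ht
    have hmem : min a (w t) ∈ Icc (w 0) (w t) := by
      constructor
      · rw [hw0]; exact le_min ha hwt0
      · exact min_le_right _ _
    obtain ⟨c, hc, hwc'⟩ := intermediate_value_Icc ht hwc.continuousOn hmem
    have hset : w ⁻¹' Iic a ∩ Icc 0 t = Icc 0 c := by
      ext s
      simp only [mem_inter_iff, mem_preimage, mem_Iic, mem_Icc]
      constructor
      · rintro ⟨hsa, hs0, hst⟩
        refine ⟨hs0, ?_⟩
        have : w s ≤ min a (w t) := le_min hsa (hwm.monotone hst)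
        rw [← hwc'] at this
        exact (hwm.le_iff_le).mp this
      · rintro ⟨hs0, hsc⟩
        have hws : w s ≤ w c := hwm.monotone hsc
        rw [hwc'] at hws
        exact ⟨le_trans hws (min_le_left _ _), hs0, le_trans hsc hc.2⟩
    have hμ : μt (w ⁻¹' Iic a) = ENNReal.ofReal (w c) := by
      rw [hμt, withDensity_apply _ (hwmeas measurableSet_Iic),
        Measure.restrict_restrict (hwmeas measurableSet_Iic), hset]
      have hi : IntegrableOn vb (Icc 0 c) :=
        (intervalIntegrable_iff_integrableOn_Icc_of_le hc.1).mp (hint 0 c)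
      rw [← ofReal_integral_eq_lintegral_ofReal hi
        (Filter.Eventually.of_forall fun s => le_trans (by norm_num) (hge s))]
      congr 1
      rw [hw, intervalIntegral.integral_of_le hc.1, ← integral_Icc_eq_integral_Ioc]
    rw [hμ]
    have : Iic a ∩ Icc (0:ℝ) (w t) = Icc 0 (min a (w t)) := by
      ext s; simp only [mem_inter_iff, mem_Iic, mem_Icc, le_min_iff]
      tauto
    rw [this, hwc', Real.volume_Icc, sub_zero]

lemma michel_subst_aux{E : Type*} [NormedAddCommGroup E] [NormedSpace ℝ E]
    (vb : ℝ → ℝ) (hvb : Measurable vb) (hge : ∀ t, (1:ℝ)/2 ≤ vb t)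
    (hint : ∀ a b : ℝ, IntervalIntegrable vb volume a b)
    (w : ℝ → ℝ) (hw : ∀ t, w t = ∫ s in (0:ℝ)..t, vb s)
    (hwc : Continuous w) (hwm : StrictMono w)
    (ζ : ℝ → ℝ) (hζmeas : Measurable ζ)
    (hζw : ∀ t, ζ (w t) = t) (hwζ : ∀ σ, w (ζ σ) = σ)
    (g : ℝ → E) (t : ℝ) (ht : 0 ≤ t) :
    ∫ s in (0:ℝ)..t, vb s • g (w s) = ∫ σ in (0:ℝ)..(w t), g σ := by
  have hw0 : w 0 = 0 := by rw [hw, intervalIntegral.integral_same]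
  have hwt0 : 0 ≤ w t := hw0 ▸ hwm.monotone ht
  have hwmeas : Measurable w := hwc.measurable
  set μt := (volume.restrict (Icc (0:ℝ) t)).withDensity (fun s => ENNReal.ofReal (vb s)) with hμt
  have hmap : Measure.map w μt = volume.restrict (Icc 0 (w t)) :=
    michel_map_aux vb hvb hge hint w hw hwc hwm t ht
  by_cases hg : AEStronglyMeasurable g (volume.restrict (Icc 0 (w t)))
  · rw [intervalIntegral.integral_of_le ht, intervalIntegral.integral_of_le hwt0,
      ← integral_Icc_eq_integral_Ioc, ← integral_Icc_eq_integral_Ioc]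
    calc ∫ s in Icc (0:ℝ) t, vb s • g (w s)
        = ∫ s, (fun s => (vb s).toNNReal) s • g (w s) ∂(volume.restrict (Icc 0 t)) := by
          refine setIntegral_congr_fun measurableSet_Icc fun s _ => ?_
          rw [NNReal.smul_def, Real.coe_toNNReal _ (le_trans (by norm_num) (hge s))]
      _ = ∫ s, g (w s) ∂μt := by
          rw [hμt,
            show (fun s => ENNReal.ofReal (vb s)) = (fun s => (((vb s).toNNReal : ℝ≥0) : ℝ≥0∞))
              from rfl,
            integral_withDensity_eq_integral_smul (hvb.real_toNNReal)]
      _ = ∫ σ, g σ ∂(Measure.map w μt) := by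
          rw [integral_map hwmeas.aemeasurable (hmap ▸ hg)]
      _ = ∫ σ in Icc (0:ℝ) (w t), g σ := by rw [hmap]
  · have hR : (∫ σ in (0:ℝ)..(w t), g σ) = 0 := by
      refine intervalIntegral.integral_non_aestronglyMeasurable_of_le hwt0 fun h => hg ?_
      refine h.mono_ac ?_
      refine Measure.absolutelyContinuous_of_le_smul (c := 1) ?_
      rw [one_smul]
      exact Measure.restrict_mono_ae Ioc_ae_eq_Icc.symm.le
    have hL : (∫ s in (0:ℝ)..t, vb s • g (w s)) = 0 := by
      refine intervalIntegral.integral_non_aestronglyMeasurable_of_le ht fun hF => ?_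
      -- From measurability of s ↦ vb s • g (w s) deduce measurability of g, contradiction
      have h1 : AEStronglyMeasurable (fun s => g (w s)) (volume.restrict (Ioc (0:ℝ) t)) := by
        have h2 := (AEStronglyMeasurable.smul
          ((hvb.inv).aestronglyMeasurable (μ := volume.restrict (Ioc 0 t))) hF)
        refine h2.congr (Filter.Eventually.of_forall fun s => ?_)
        show (vb s)⁻¹ • vb s • g (w s) = g (w s)
        rw [smul_smul, inv_mul_cancel₀ (by have := hge s; positivity), one_smul]
      have h2 : AEStronglyMeasurable (fun s => g (w s)) μt := by
        refine h1.mono_ac ?_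
        refine ((withDensity_absolutelyContinuous _ _).trans ?_)
        refine Measure.absolutelyContinuous_of_le_smul (c := 1) ?_
        rw [one_smul]
        exact Measure.restrict_mono_ae Ioc_ae_eq_Icc.symm.le
      obtain ⟨h', h'sm, hae⟩ := h2
      apply hg
      refine ⟨fun σ => h' (ζ σ), h'sm.comp_measurable hζmeas, ?_⟩
      obtain ⟨N, hNsub, hNmeas, hNnull⟩ :=
        exists_measurable_superset_of_null (ae_iff.mp hae)
      rw [← hmap]
      have hmapN : (Measure.map w μt) (ζ ⁻¹' N) = 0 := by
        rw [Measure.map_apply hwmeas (hζmeas hNmeas)]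
        have : w ⁻¹' (ζ ⁻¹' N) = N := by
          ext s; simp [mem_preimage, hζw s]
        rwa [this]
      refine measure_mono_null ?_ hmapN
      intro σ hσ
      simp only [mem_setOf_eq] at hσ
      have : ¬ g (w (ζ σ)) = h' (ζ σ) := by rwa [hwζ σ]
      exact hNsub this
    rw [hL, hR]

/-- Michel time-change lemma: if `(x, z)` solves
`x' = v f(x,u)`, `x 0 = b`, `z' = v`, `z 0 = 0` (in integral form) on `[0,T]` with
measurable controls `u(t) ∈ U`, `v(t) ≥ 1/2`, then there is a measurable control `u'` with
values in `U` and a trajectory `x'` of `y' = f(y, u'(t))`, `y 0 = b`, with `x'(z t) = x t`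
on `[0,T]` and
`∫₀^T v(t) e^{−r z(t)} f₀(x t, u t) dt = ∫₀^{z T} e^{−rt} f₀(x' t, u' t) dt`. -/
theorem michel_time_change
    {m : ℕ} {Ucar : Type*} [MeasurableSpace Ucar]
    (U : Set Ucar)
    (f : EuclideanSpace ℝ (Fin m) → Ucar → EuclideanSpace ℝ (Fin m))
    (f₀ : EuclideanSpace ℝ (Fin m) → Ucar → ℝ)
    (r : ℝ) (hr : 0 ≤ r)
    (T : ℝ) (hT : 0 < T)
    (b : EuclideanSpace ℝ (Fin m))
    (u : ℝ → Ucar) (hu_meas : Measurable u) (hu_mem : ∀ t, u t ∈ U)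
    (v : ℝ → ℝ) (hv_meas : Measurable v) (hv_ge : ∀ t, (1:ℝ)/2 ≤ v t)
    (hv_int : IntegrableOn v (Icc 0 T))
    (x : ℝ → EuclideanSpace ℝ (Fin m)) (z : ℝ → ℝ)
    (hx : ∀ t ∈ Icc 0 T, x t = b + ∫ s in (0:ℝ)..t, v s • f (x s) (u s))
    (hz : ∀ t ∈ Icc 0 T, z t = ∫ s in (0:ℝ)..t, v s) :
    ∃ (u' : ℝ → Ucar) (x' : ℝ → EuclideanSpace ℝ (Fin m)),
      Measurable u' ∧ (∀ s, u' s ∈ U) ∧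
      x' 0 = b ∧
      (∀ s ∈ Icc 0 (z T), x' s = b + ∫ σ in (0:ℝ)..s, f (x' σ) (u' σ)) ∧
      (∀ t ∈ Icc 0 T, x' (z t) = x t) ∧
      (∫ t in (0:ℝ)..T, v t * (Real.exp (-r * z t) * f₀ (x t) (u t)))
        = ∫ s in (0:ℝ)..(z T), Real.exp (-r * s) * f₀ (x' s) (u' s) := by
  classical
  set vb : ℝ → ℝ := fun s => if s ∈ Icc (0:ℝ) T then v s else 1 with hvb_def
  have hvb_meas : Measurable vb := Measurable.ite measurableSet_Icc hv_meas measurable_const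
  have hvb_ge : ∀ t, (1:ℝ)/2 ≤ vb t := by
    intro t
    show (1:ℝ)/2 ≤ if t ∈ Icc (0:ℝ) T then v t else 1
    split_ifs with h
    · exact hv_ge t
    · norm_num
  have hvb_eq : ∀ s ∈ Icc (0:ℝ) T, vb s = v s := fun s hs => by
    show (if s ∈ Icc (0:ℝ) T then v s else 1) = v s
    rw [if_pos hs]
  have hvb_int : ∀ a c : ℝ, IntervalIntegrable vb volume a c := by
    intro a c
    rw [intervalIntegrable_iff]
    have h1 : IntegrableOn vb (uIoc a c ∩ Icc 0 T) := by
      refine (hv_int.mono_set inter_subset_right).congr_fun ?_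
        (measurableSet_uIoc.inter measurableSet_Icc)
      exact fun s hs => (hvb_eq s hs.2).symm ▸ rfl
    have h2 : IntegrableOn vb (uIoc a c \ Icc 0 T) := by
      have hconst : IntegrableOn (fun _ : ℝ => (1:ℝ)) (uIoc a c \ Icc 0 T) :=
        (integrableOn_const_iff).mpr
          (Or.inr (lt_of_le_of_lt (measure_mono diff_subset) measure_Ioc_lt_top))
      refine hconst.congr_fun ?_ (measurableSet_uIoc.diff measurableSet_Icc)
      intro s hs
      show (1:ℝ) = if s ∈ Icc (0:ℝ) T then v s else 1
      rw [if_neg hs.2]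
    exact ((h1.union h2).mono_set (by rw [inter_union_diff]))
  set w : ℝ → ℝ := fun t => ∫ s in (0:ℝ)..t, vb s with hw_def
  have hw : ∀ t, w t = ∫ s in (0:ℝ)..t, vb s := fun t => rfl
  have hw_cont : Continuous w := intervalIntegral.continuous_primitive hvb_int 0
  have hw_sub : ∀ a c : ℝ, a ≤ c → (c - a)/2 ≤ w c - w a := by
    intro a c hac
    rw [hw, hw, intervalIntegral.integral_interval_sub_left (hvb_int 0 c) (hvb_int 0 a)]
    have : ∫ s in a..c, (1:ℝ)/2 ≤ ∫ s in a..c, vb s :=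
      intervalIntegral.integral_mono_on hac (intervalIntegrable_const) (hvb_int a c)
        (fun s _ => hvb_ge s)
    simpa [div_eq_mul_inv, sub_mul, mul_comm] using this
  have hw_mono : StrictMono w := by
    intro a c hac
    have := hw_sub a c hac.le
    have h2 : (0:ℝ) < (c - a)/2 := by linarith
    linarith
  have hw0 : w 0 = 0 := by rw [hw, intervalIntegral.integral_same]
  have hw_surj : Function.Surjective w := by
    intro y
    rcases le_total 0 y with hy | hy
    · have h1 : w 0 ≤ y := by rw [hw0]; exact hy
      have h2 : y ≤ w (2*y) := by
        have := hw_sub 0 (2*y) (by linarith)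
        rw [hw0] at this; linarith
      obtain ⟨c, _, hc⟩ := intermediate_value_Icc (by linarith : (0:ℝ) ≤ 2*y)
        hw_cont.continuousOn ⟨h1, h2⟩
      exact ⟨c, hc⟩
    · have h2 : w (2*y) ≤ y := by
        have := hw_sub (2*y) 0 (by linarith)
        rw [hw0] at this; linarith
      have h1 : y ≤ w 0 := by rw [hw0]; exact hy
      obtain ⟨c, _, hc⟩ := intermediate_value_Icc (by linarith : 2*y ≤ (0:ℝ))
        hw_cont.continuousOn ⟨h2, h1⟩
      exact ⟨c, hc⟩
  set e := StrictMono.orderIsoOfSurjective w hw_mono hw_surj with he_def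
  set ζ : ℝ → ℝ := fun σ => e.symm σ with hζ_def
  have hζw : ∀ t, ζ (w t) = t := fun t =>
    StrictMono.orderIsoOfSurjective_symm_apply_self w hw_mono hw_surj t
  have hwζ : ∀ σ, w (ζ σ) = σ := fun σ =>
    StrictMono.orderIsoOfSurjective_self_symm_apply w hw_mono hw_surj σ
  have hζ_mono : Monotone ζ := fun a c hac => (e.symm.monotone hac)
  have hζ_meas : Measurable ζ := hζ_mono.measurable
  have hζ0 : ζ 0 = 0 := by have := hζw 0; rwa [hw0] at this
  have hzw : ∀ t ∈ Icc (0:ℝ) T, z t = w t := by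
    intro t htm
    rw [hz t htm, hw]
    refine intervalIntegral.integral_congr fun s hs => ?_
    rw [uIcc_of_le htm.1] at hs
    exact (hvb_eq s ⟨hs.1, le_trans hs.2 htm.2⟩).symm
  have hT' : T ∈ Icc (0:ℝ) T := ⟨hT.le, le_refl T⟩
  have h0' : (0:ℝ) ∈ Icc (0:ℝ) T := ⟨le_refl 0, hT.le⟩
  have hx0 : x 0 = b := by
    rw [hx 0 h0', intervalIntegral.integral_same, add_zero]
  refine ⟨fun σ => u (ζ σ), fun σ => x (ζ σ), hu_meas.comp hζ_meas,
    fun σ => hu_mem _, by beta_reduce; rw [hζ0, hx0], ?_, ?_, ?_⟩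
  · -- integral equation for x'
    intro σ₀ hσ₀
    beta_reduce
    rw [hzw T hT'] at hσ₀
    set t := ζ σ₀ with ht_def
    have hσw : σ₀ = w t := (hwζ σ₀).symm
    have htmem : t ∈ Icc (0:ℝ) T := by
      constructor
      · rw [← hζ0]; exact hζ_mono hσ₀.1
      · rw [← hζw T]; exact hζ_mono hσ₀.2
    have hsub : (∫ s in (0:ℝ)..t, vb s • f (x (ζ (w s))) (u (ζ (w s))))
        = ∫ σ in (0:ℝ)..(w t), f (x (ζ σ)) (u (ζ σ)) :=
      michel_subst_aux vb hvb_meas hvb_ge hvb_int w hw hw_cont hw_mono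
        ζ hζ_meas hζw hwζ (fun σ => f (x (ζ σ)) (u (ζ σ))) t htmem.1
    rw [hσw, ← hsub]
    rw [hx t htmem]
    congr 1
    refine intervalIntegral.integral_congr fun s hs => ?_
    rw [uIcc_of_le htmem.1] at hs
    have hsT : s ∈ Icc (0:ℝ) T := ⟨hs.1, le_trans hs.2 htmem.2⟩
    rw [hvb_eq s hsT, hζw s]
  · -- x' (z t) = x t
    intro t htm
    beta_reduce
    rw [hzw t htm, hζw t]
  · -- the integral identity
    have hsub : (∫ s in (0:ℝ)..T,
          vb s • (Real.exp (-r * w s) * f₀ (x (ζ (w s))) (u (ζ (w s)))))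
        = ∫ σ in (0:ℝ)..(w T), Real.exp (-r * σ) * f₀ (x (ζ σ)) (u (ζ σ)) :=
      michel_subst_aux vb hvb_meas hvb_ge hvb_int w hw hw_cont hw_mono
        ζ hζ_meas hζw hwζ
        (fun σ => Real.exp (-r * σ) * f₀ (x (ζ σ)) (u (ζ σ))) T hT.le
    beta_reduce
    rw [hzw T hT', ← hsub]
    refine intervalIntegral.integral_congr fun s hs => ?_
    rw [uIcc_of_le hT.le] at hs
    rw [smul_eq_mul, hvb_eq s hs, hζw s, hzw s hs]
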